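/- For each multi-index k = (k₁,…,k_m) ∈ ℕ^m, the Fueter polynomial P_k(x) := (1/k!) ∑_σ z_{i₁} z_{i₂} ⋯ z_{i_k} (sum over all distinguishable permutations of the multiset with kⱼ copies of j, k = |k|, product taken right-to-left, well defined independent of bracketing by the symmetrized-associativity lemma) is both left and right monogenic on M: ∂̄_B P_k = 0 and P_k ∂̄_B = 0. -/

import Mathlib

namespace FueterAux

variable {A : Type*} [NormedAddCommGroup A] [NormedSpace ℝ A] {m : ℕ}

def FP (w : List (Fin (m + 1))) : Finset (List (Fin (m + 1))) := w.permutations.toFinset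

lemma mem_FP {w l' : List (Fin (m + 1))} : l' ∈ FP w ↔ l'.Perm w := by
  simp [FP, List.mem_permutations]

lemma FP_nil : FP (m := m) [] = {[]} := by
  ext l'
  simp only [mem_FP, List.perm_nil, Finset.mem_singleton]

lemma sum_FP_decomp {N : Type*} [AddCommMonoid N] {w : List (Fin (m + 1))} (hw : w ≠ [])
    (f : List (Fin (m + 1)) → N) :
    ∑ l' ∈ FP w, f l' = ∑ b ∈ w.toFinset, ∑ u ∈ FP (w.erase b), f (b :: u) := by
  have hset : FP w = w.toFinset.biUnion (fun b => (FP (w.erase b)).image (b :: ·)) := by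
    ext l'
    simp only [mem_FP, Finset.mem_biUnion, Finset.mem_image, List.mem_toFinset]
    constructor
    · intro h
      cases l' with
      | nil => exact absurd h.symm.eq_nil hw
      | cons b u =>
        have hb : b ∈ w := h.mem_iff.mp List.mem_cons_self
        exact ⟨b, hb, u, (h.trans (List.perm_cons_erase hb)).cons_inv, rfl⟩
    · rintro ⟨b, hb, u, hu, rfl⟩
      exact (hu.cons b).trans (List.perm_cons_erase hb).symm
  rw [hset, Finset.sum_biUnion]
  · refine Finset.sum_congr rfl fun b _ => ?_
    rw [Finset.sum_image]
    intro x _ y _ hxy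
    simpa using hxy
  · intro b hb c hc hbc
    simp only [Function.onFun]
    rw [Finset.disjoint_left]
    rintro x hx hx'
    simp only [Finset.mem_image] at hx hx'
    obtain ⟨u, _, rfl⟩ := hx
    obtain ⟨u', _, h⟩ := hx'
    apply hbc
    have := h
    rw [List.cons.injEq] at this
    exact this.1.symm


/-- Fueter variable values. -/
def yy (e : A) (v : Fin (m + 1) → A) (p : Fin (m + 1) → ℝ) (i : Fin (m + 1)) : A :=
  p i • e - p 0 • v i

/-- Directional derivative of the Fueter variable `z b` in direction `single s 1`. -/
def dd (e : A) (v : Fin (m + 1) → A) (s b : Fin (m + 1)) : A :=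
  (if b = s then e else 0) - (if s = 0 then v b else 0)

variable (μ : A →L[ℝ] A →L[ℝ] A) (e : A) (v : Fin (m + 1) → A) (p : Fin (m + 1) → ℝ)

/-- Right-associated product of Fueter variables along a list. -/
noncomputable def prodY : List (Fin (m + 1)) → A
  | [] => e
  | b :: t => μ (yy e v p b) (prodY t)

/-- Directional derivative (in direction `single s 1`) of the product along a list. -/
noncomputable def Phi (s : Fin (m + 1)) : List (Fin (m + 1)) → A
  | [] => 0
  | b :: t => μ (dd e v s b) (prodY μ e v p t) + μ (yy e v p b) (Phi s t)

/-- Symmetrized product. -/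
noncomputable def SS (w : List (Fin (m + 1))) : A := ∑ l' ∈ FP w, prodY μ e v p l'

/-- Directional derivative of the symmetrized product. -/
noncomputable def DD (s : Fin (m + 1)) (w : List (Fin (m + 1))) : A := ∑ l' ∈ FP w, Phi μ e v p s l'

@[simp] lemma SS_nil : SS μ e v p [] = e := by
  rw [SS, FP_nil]; simp [prodY]

@[simp] lemma DD_nil (s : Fin (m + 1)) : DD μ e v p s [] = 0 := by
  rw [DD, FP_nil]; simp [Phi]

lemma SS_decomp {w : List (Fin (m + 1))} (hw : w ≠ []) :
    SS μ e v p w = ∑ b ∈ w.toFinset, μ (yy e v p b) (SS μ e v p (w.erase b)) := by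
  rw [SS, sum_FP_decomp hw]
  refine Finset.sum_congr rfl fun b _ => ?_
  rw [SS, map_sum]
  rfl

lemma DD_decomp {w : List (Fin (m + 1))} (hw : w ≠ []) (s : Fin (m + 1)) :
    DD μ e v p s w = ∑ b ∈ w.toFinset,
      (μ (dd e v s b) (SS μ e v p (w.erase b)) + μ (yy e v p b) (DD μ e v p s (w.erase b))) := by
  rw [DD, sum_FP_decomp hw]
  refine Finset.sum_congr rfl fun b _ => ?_
  rw [SS, DD, map_sum, map_sum, ← Finset.sum_add_distrib]
  rfl


/-! ### Associator lemmas -/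

/-- The associator. -/
noncomputable def asc (a x b : A) : A := μ (μ a x) b - μ a (μ x b)

lemma asc_polar23 (a x y : A) :
    asc μ a x y + asc μ a y x =
      (μ (μ a (x + y)) (x + y) - μ a (μ (x + y) (x + y)))
        - (μ (μ a x) x - μ a (μ x x)) - (μ (μ a y) y - μ a (μ y y)) := by
  simp only [asc, map_add, ContinuousLinearMap.add_apply]
  abel

lemma asc_polar12 (a x b : A) :
    asc μ a x b + asc μ x a b =
      (μ (μ (a + x) (a + x)) b - μ (a + x) (μ (a + x) b))
        - (μ (μ a a) b - μ a (μ a b)) - (μ (μ x x) b - μ x (μ x b)) := by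
  simp only [asc, map_add, ContinuousLinearMap.add_apply]
  abel

variable (hLA : ∀ a b : A, μ (μ a a) b = μ a (μ a b))
variable (hRA : ∀ a b : A, μ (μ a b) b = μ a (μ b b))

include hRA in
lemma asc_swap23 (a x y : A) : asc μ a x y = - asc μ a y x := by
  rw [eq_neg_iff_add_eq_zero, asc_polar23]
  rw [hRA, hRA, hRA]
  simp

include hLA in
lemma asc_swap12 (a x b : A) : asc μ a x b = - asc μ x a b := by
  rw [eq_neg_iff_add_eq_zero, asc_polar12]
  rw [hLA, hLA, hLA]
  simp

include hLA hRA in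
lemma asc_swap13 (a x b : A) : asc μ a x b = - asc μ b x a := by
  rw [asc_swap12 μ hLA, asc_swap23 μ hRA, asc_swap12 μ hLA]
  simp

include hLA hRA in
lemma asc_flex (a x : A) : asc μ a x a = 0 := by
  rw [asc_swap23 μ hRA]
  have : asc μ a a x = 0 := by
    simp [asc, hLA a x]
  rw [this, neg_zero]

@[simp] lemma asc_zero_mid (a b : A) : asc μ a 0 b = 0 := by simp [asc]

lemma asc_nsmul_mid (n : ℕ) (a x b : A) : asc μ a (n • x) b = n • asc μ a x b := by
  simp [asc, smul_sub]

/-! ### Antisymmetric sum lemmas -/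

lemma eq_zero_of_self_eq_neg {X : A} (h : X = -X) : X = 0 := by
  have h2 : (2 : ℝ) • X = 0 := by
    rw [two_smul]
    nth_rewrite 1 [h]
    exact neg_add_cancel X
  rcases smul_eq_zero.mp h2 with h3 | h3
  · norm_num at h3
  · exact h3

lemma sum_square_antisymm {ι : Type*} (F : Finset ι) (f : ι → ι → A)
    (h : ∀ a b, f a b = - f b a) : ∑ a ∈ F, ∑ b ∈ F, f a b = 0 := by
  apply eq_zero_of_self_eq_neg
  calc ∑ a ∈ F, ∑ b ∈ F, f a b = ∑ b ∈ F, ∑ a ∈ F, f a b := Finset.sum_comm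
    _ = ∑ b ∈ F, ∑ a ∈ F, - f b a := by
        refine Finset.sum_congr rfl fun b _ => Finset.sum_congr rfl fun a _ => h a b
    _ = - ∑ a ∈ F, ∑ b ∈ F, f a b := by simp

lemma sum_erase_swap {N : Type*} [AddCommMonoid N] (w : List (Fin (m + 1))) (f g : Fin (m + 1) → Fin (m + 1) → N)
    (hfg : ∀ b c, f c b = g b c) :
    ∑ b ∈ w.toFinset, ∑ c ∈ (w.erase b).toFinset, f b c
      = ∑ b ∈ w.toFinset, ∑ c ∈ (w.erase b).toFinset, g b c := by
  have key : ∀ h : Fin (m + 1) → Fin (m + 1) → N,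
      ∑ b ∈ w.toFinset, ∑ c ∈ (w.erase b).toFinset, h b c
        = ∑ b ∈ w.toFinset, ∑ c ∈ w.toFinset, if c ∈ w.erase b then h b c else 0 := by
    intro h
    refine Finset.sum_congr rfl fun b _ => ?_
    have h1 : (w.erase b).toFinset ⊆ w.toFinset := by
      intro c hc
      rw [List.mem_toFinset] at hc ⊢
      exact List.mem_of_mem_erase hc
    calc ∑ c ∈ (w.erase b).toFinset, h b c
        = ∑ c ∈ (w.erase b).toFinset, (if c ∈ w.erase b then h b c else 0) := by
          refine Finset.sum_congr rfl fun c hc => ?_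
          rw [List.mem_toFinset] at hc; rw [if_pos hc]
      _ = ∑ c ∈ w.toFinset, (if c ∈ w.erase b then h b c else 0) :=
          Finset.sum_subset h1 (fun c _ hc => by
            rw [List.mem_toFinset] at hc; rw [if_neg hc])
  rw [key f, key g, Finset.sum_comm]
  refine Finset.sum_congr rfl fun b hb => Finset.sum_congr rfl fun c hc => ?_
  rw [List.mem_toFinset] at hb hc
  have hcond : (b ∈ w.erase c) ↔ (c ∈ w.erase b) := by
    rcases eq_or_ne b c with rfl | hbc
    · rfl
    · rw [List.mem_erase_of_ne hbc, List.mem_erase_of_ne hbc.symm]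
      exact ⟨fun _ => hc, fun _ => hb⟩
  rw [if_congr hcond rfl rfl]
  rcases Classical.em (c ∈ w.erase b) with h | h
  · rw [if_pos h, if_pos h, hfg]
  · rw [if_neg h, if_neg h]

lemma sum_erase_antisymm (w : List (Fin (m + 1))) (f : Fin (m + 1) → Fin (m + 1) → A)
    (h : ∀ b c, f c b = - f b c) :
    ∑ b ∈ w.toFinset, ∑ c ∈ (w.erase b).toFinset, f b c = 0 := by
  apply eq_zero_of_self_eq_neg
  conv_lhs => rw [sum_erase_swap w f (fun b c => - f b c) h]
  rw [← Finset.sum_neg_distrib]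
  refine Finset.sum_congr rfl fun b _ => ?_
  rw [← Finset.sum_neg_distrib]


/-! ### Multiplication helper lemmas -/

lemma mu_yy_left (he : ∀ a : A, μ e a = a ∧ μ a e = a) (b : Fin (m + 1)) (X : A) :
    μ (yy e v p b) X = p b • X - p 0 • μ (v b) X := by
  simp only [yy, map_sub, map_smul, ContinuousLinearMap.sub_apply,
    ContinuousLinearMap.smul_apply, (he X).1]

lemma mu_yy_right (he : ∀ a : A, μ e a = a ∧ μ a e = a) (b : Fin (m + 1)) (X : A) :
    μ X (yy e v p b) = p b • X - p 0 • μ X (v b) := by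
  simp only [yy, map_sub, map_smul, (he X).2]

lemma erase_toFinset_subset (w : List (Fin (m + 1))) (b : Fin (m + 1)) :
    (w.erase b).toFinset ⊆ w.toFinset := by
  intro c hc
  rw [List.mem_toFinset] at hc ⊢
  exact List.mem_of_mem_erase hc

/-! ### Formulas for `DD` -/

lemma DD_eq_zero : ∀ (n : ℕ) (w : List (Fin (m + 1))), w.length = n →
    (0 : Fin (m + 1)) ∉ w → ∀ s, s ≠ 0 → s ∉ w → DD μ e v p s w = 0 := by
  intro n
  induction n with
  | zero =>
    intro w hw _ s _ _
    rw [List.length_eq_zero_iff.mp hw]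
    exact DD_nil μ e v p s
  | succ n ih =>
    intro w hw h0 s hs hsw
    have hwne : w ≠ [] := by
      intro h; rw [h] at hw; simp at hw
    rw [DD_decomp μ e v p hwne s]
    refine Finset.sum_eq_zero fun b hb => ?_
    rw [List.mem_toFinset] at hb
    have hbs : b ≠ s := fun h => hsw (h ▸ hb)
    have hdd : dd e v s b = 0 := by
      rw [dd, if_neg hbs, if_neg hs]; simp
    have hDD : DD μ e v p s (w.erase b) = 0 :=
      ih (w.erase b) (by rw [List.length_erase_of_mem hb, hw]; rfl)
        (fun h => h0 (List.mem_of_mem_erase h)) s hs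
        (fun h => hsw (List.mem_of_mem_erase h))
    rw [hdd, hDD]
    simp

lemma DD_eq_smul (he : ∀ a : A, μ e a = a ∧ μ a e = a) :
    ∀ (n : ℕ) (w : List (Fin (m + 1))), w.length = n → (0 : Fin (m + 1)) ∉ w →
    ∀ s, s ≠ 0 → s ∈ w → DD μ e v p s w = w.length • SS μ e v p (w.erase s) := by
  intro n
  induction n with
  | zero =>
    intro w hw _ s _ hsw
    rw [List.length_eq_zero_iff.mp hw] at hsw
    simp at hsw
  | succ n ih =>
    intro w hw h0 s hs hsw
    have hwne : w ≠ [] := List.ne_nil_of_mem hsw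
    rw [DD_decomp μ e v p hwne s, Finset.sum_add_distrib]
    have hA : ∑ b ∈ w.toFinset, μ (dd e v s b) (SS μ e v p (w.erase b))
        = SS μ e v p (w.erase s) := by
      have hcongr : ∀ b ∈ w.toFinset, μ (dd e v s b) (SS μ e v p (w.erase b))
          = if b = s then SS μ e v p (w.erase s) else 0 := by
        intro b hb
        rcases eq_or_ne b s with rfl | hbs
        · rw [if_pos rfl, dd, if_pos rfl, if_neg hs]
          simp [(he _).1]
        · rw [if_neg hbs, dd, if_neg hbs, if_neg hs]
          simp
      rw [Finset.sum_congr rfl hcongr, Finset.sum_ite_eq' w.toFinset s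
        (fun _ => SS μ e v p (w.erase s)), if_pos (List.mem_toFinset.mpr hsw)]
    have hB : ∑ b ∈ w.toFinset, μ (yy e v p b) (DD μ e v p s (w.erase b))
        = n • SS μ e v p (w.erase s) := by
      have hstep : ∀ b ∈ w.toFinset, μ (yy e v p b) (DD μ e v p s (w.erase b)) =
          if b ∈ w.erase s then n • μ (yy e v p b) (SS μ e v p ((w.erase s).erase b)) else 0 := by
        intro b hb
        rw [List.mem_toFinset] at hb
        rcases Classical.em (b ∈ w.erase s) with hbe | hbe
        · rw [if_pos hbe]
          have hse : s ∈ w.erase b := by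
            rcases eq_or_ne b s with rfl | hbs
            · exact hbe
            · exact (List.mem_erase_of_ne hbs.symm).mpr hsw
          have hlen : (w.erase b).length = n := by
            rw [List.length_erase_of_mem hb, hw]; rfl
          rw [ih (w.erase b) hlen (fun h => h0 (List.mem_of_mem_erase h)) s hs hse,
            hlen, List.erase_comm, map_nsmul]
        · rw [if_neg hbe]
          have hbs : b = s := by
            by_contra hbs
            exact hbe ((List.mem_erase_of_ne hbs).mpr hb)
          subst hbs
          rw [DD_eq_zero μ e v p (w.erase b).length (w.erase b) rfl
            (fun h => h0 (List.mem_of_mem_erase h)) b hs hbe]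
          simp
      rw [Finset.sum_congr rfl hstep]
      have hsub := erase_toFinset_subset w s
      have h2 : ∑ b ∈ w.toFinset,
          (if b ∈ w.erase s then n • μ (yy e v p b) (SS μ e v p ((w.erase s).erase b)) else 0)
          = ∑ b ∈ (w.erase s).toFinset,
            n • μ (yy e v p b) (SS μ e v p ((w.erase s).erase b)) := by
        rw [← Finset.sum_subset hsub (fun b _ hb => by
          rw [List.mem_toFinset] at hb; rw [if_neg hb])]
        refine Finset.sum_congr rfl fun b hb => ?_
        rw [List.mem_toFinset] at hb
        rw [if_pos hb]
      rw [h2]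
      rcases eq_or_ne (w.erase s) [] with hes | hes
      · have hn : n = 0 := by
          have := List.length_erase_of_mem hsw
          rw [hes, hw] at this
          simpa using this.symm
        rw [hes, hn]
        simp
      · rw [← Finset.smul_sum, ← SS_decomp μ e v p hes]
    rw [hA, hB, hw, succ_nsmul]
    rw [add_comm]


/-! ### Left monogenicity -/

lemma L_zero (he : ∀ a : A, μ e a = a ∧ μ a e = a) (hv0 : v 0 = e) :
    ∀ (n : ℕ) (w : List (Fin (m + 1))), w.length = n → (0 : Fin (m + 1)) ∉ w →
    ∑ s, μ (v s) (DD μ e v p s w) = 0 := by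
  intro n
  induction n with
  | zero =>
    intro w hw _
    rw [List.length_eq_zero_iff.mp hw]
    simp
  | succ n ih =>
    intro w hw h0
    have hwne : w ≠ [] := by intro h; rw [h] at hw; simp at hw
    have hblen : ∀ b, b ∈ w → (w.erase b).length = n := fun b hb => by
      rw [List.length_erase_of_mem hb, hw]; rfl
    have hb0 : ∀ b, b ∈ w → (0 : Fin (m + 1)) ∉ w.erase b :=
      fun b _ h => h0 (List.mem_of_mem_erase h)
    calc ∑ s, μ (v s) (DD μ e v p s w)
        = ∑ b ∈ w.toFinset, ((∑ s, μ (v s) (μ (dd e v s b) (SS μ e v p (w.erase b)))) +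
            ∑ s, μ (v s) (μ (yy e v p b) (DD μ e v p s (w.erase b)))) := by
          simp_rw [DD_decomp μ e v p hwne, map_sum, map_add]
          rw [Finset.sum_comm]
          exact Finset.sum_congr rfl fun b _ => Finset.sum_add_distrib
      _ = ∑ b ∈ w.toFinset, ((0 : A) + (- p 0) • (∑ s ∈ w.toFinset, n •
            (μ (v s) (μ (v b) (SS μ e v p ((w.erase b).erase s)))
              - μ (v b) (μ (v s) (SS μ e v p ((w.erase b).erase s)))))) := by
          refine Finset.sum_congr rfl fun b hbF => ?_
          have hb : b ∈ w := List.mem_toFinset.mp hbF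
          congr 1
          · -- leading terms vanish
            have hp1 : ∀ s, μ (v s) (μ (dd e v s b) (SS μ e v p (w.erase b))) =
                (if b = s then μ (v s) (SS μ e v p (w.erase b)) else 0)
                  - (if s = 0 then μ (v s) (μ (v b) (SS μ e v p (w.erase b))) else 0) := by
              intro s
              rw [dd, map_sub, ContinuousLinearMap.sub_apply, map_sub]
              congr 1
              · rcases eq_or_ne b s with rfl | hbs
                · rw [if_pos rfl, if_pos rfl, (he _).1]
                · rw [if_neg hbs, if_neg hbs]; simp
              · rcases eq_or_ne s 0 with rfl | hs
                · rw [if_pos rfl, if_pos rfl]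
                · rw [if_neg hs, if_neg hs]; simp
            rw [Finset.sum_congr rfl (fun s _ => hp1 s), Finset.sum_sub_distrib,
              Finset.sum_ite_eq Finset.univ b
                (fun s => μ (v s) (SS μ e v p (w.erase b))),
              Finset.sum_ite_eq' Finset.univ (0 : Fin (m + 1))
                (fun s => μ (v s) (μ (v b) (SS μ e v p (w.erase b)))),
              if_pos (Finset.mem_univ b), if_pos (Finset.mem_univ (0 : Fin (m + 1))),
              hv0, (he _).1, sub_self]
          · -- main terms
            have hT0 : ∑ s, μ (v s) (DD μ e v p s (w.erase b)) = 0 :=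
              ih (w.erase b) (hblen b hb) (hb0 b hb)
            have hp2 : ∀ s, μ (v s) (μ (yy e v p b) (DD μ e v p s (w.erase b))) =
                p b • μ (v s) (DD μ e v p s (w.erase b))
                - p 0 • ((μ (v s) (μ (v b) (DD μ e v p s (w.erase b)))
                    - μ (v b) (μ (v s) (DD μ e v p s (w.erase b))))
                  + μ (v b) (μ (v s) (DD μ e v p s (w.erase b)))) := by
              intro s
              rw [mu_yy_left μ e v p he, map_sub, map_smul, map_smul, sub_add_cancel]
            rw [Finset.sum_congr rfl (fun s _ => hp2 s), Finset.sum_sub_distrib,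
              ← Finset.smul_sum, hT0, smul_zero, zero_sub, ← Finset.smul_sum,
              Finset.sum_add_distrib, ← map_sum, hT0, map_zero, add_zero, ← neg_smul]
            congr 1
            have hvan : ∀ s ∈ Finset.univ, s ∉ w.toFinset →
                μ (v s) (μ (v b) (DD μ e v p s (w.erase b)))
                  - μ (v b) (μ (v s) (DD μ e v p s (w.erase b))) = 0 := by
              intro s _ hsF
              have hs : s ∉ w := fun h => hsF (List.mem_toFinset.mpr h)
              rcases eq_or_ne s 0 with rfl | hs0
              · rw [hv0, (he _).1, (he _).1, sub_self]
              · rw [DD_eq_zero μ e v p (w.erase b).length _ rfl (hb0 b hb) s hs0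
                  (fun h => hs (List.mem_of_mem_erase h))]
                simp
            rw [← Finset.sum_subset (Finset.subset_univ w.toFinset) hvan]
            refine Finset.sum_congr rfl fun s hsF => ?_
            have hs : s ∈ w := List.mem_toFinset.mp hsF
            rcases eq_or_ne s b with rfl | hsb
            · rw [sub_self, sub_self, smul_zero]
            · have hsw' : s ∈ w.erase b := (List.mem_erase_of_ne hsb).mpr hs
              have hs0 : s ≠ 0 := fun h => h0 (h ▸ hs)
              rw [DD_eq_smul μ e v p he (w.erase b).length _ rfl (hb0 b hb) s hs0 hsw',
                hblen b hb, map_nsmul, map_nsmul, map_nsmul, map_nsmul, ← smul_sub]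
      _ = 0 := by
          simp_rw [zero_add]
          rw [← Finset.smul_sum,
            sum_square_antisymm w.toFinset
              (fun b s => n • (μ (v s) (μ (v b) (SS μ e v p ((w.erase b).erase s)))
                - μ (v b) (μ (v s) (SS μ e v p ((w.erase b).erase s)))))
              (fun a c => by
                have hS : ((w.erase c).erase a) = ((w.erase a).erase c) :=
                  List.erase_comm _ _
                try simp only []
                rw [hS, smul_sub, smul_sub, neg_sub]),
            smul_zero]


/-! ### The commutator identity -/

lemma C_zero (he : ∀ a : A, μ e a = a ∧ μ a e = a)
    (hLA : ∀ a b : A, μ (μ a a) b = μ a (μ a b))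
    (hRA : ∀ a b : A, μ (μ a b) b = μ a (μ b b)) :
    ∀ (n : ℕ) (w : List (Fin (m + 1))), w.length = n → (0 : Fin (m + 1)) ∉ w →
    ∑ b ∈ w.toFinset, (μ (SS μ e v p (w.erase b)) (v b) - μ (v b) (SS μ e v p (w.erase b))) = 0 := by
  intro n
  induction n with
  | zero =>
    intro w hw _
    rw [List.length_eq_zero_iff.mp hw]
    simp
  | succ n ih =>
    intro w hw h0
    have hblen : ∀ b, b ∈ w → (w.erase b).length = n := fun b hb => by
      rw [List.length_erase_of_mem hb, hw]; rfl
    have hb0 : ∀ b, b ∈ w → (0 : Fin (m + 1)) ∉ w.erase b :=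
      fun b _ h => h0 (List.mem_of_mem_erase h)
    rcases Nat.eq_zero_or_pos n with rfl | hn
    · refine Finset.sum_eq_zero fun b hbF => ?_
      have hb := List.mem_toFinset.mp hbF
      rw [List.length_eq_zero_iff.mp (hblen b hb), SS_nil, (he _).1, (he _).2, sub_self]
    · have hne : ∀ b, b ∈ w → w.erase b ≠ [] := fun b hb h => by
        have := hblen b hb
        rw [h] at this
        simp at this
        omega
      calc ∑ b ∈ w.toFinset, (μ (SS μ e v p (w.erase b)) (v b) - μ (v b) (SS μ e v p (w.erase b)))
          = ∑ b ∈ w.toFinset, ∑ c ∈ (w.erase b).toFinset,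
              (μ (μ (yy e v p c) (SS μ e v p ((w.erase b).erase c))) (v b)
                - μ (v b) (μ (yy e v p c) (SS μ e v p ((w.erase b).erase c)))) := by
            refine Finset.sum_congr rfl fun b hbF => ?_
            have hb := List.mem_toFinset.mp hbF
            rw [SS_decomp μ e v p (hne b hb), map_sum, ContinuousLinearMap.sum_apply, map_sum,
              ← Finset.sum_sub_distrib]
        _ = ∑ b ∈ w.toFinset, ∑ c ∈ (w.erase b).toFinset,
              (p c • (μ (SS μ e v p ((w.erase b).erase c)) (v b)
                  - μ (v b) (SS μ e v p ((w.erase b).erase c)))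
                - p 0 • (asc μ (v c) (SS μ e v p ((w.erase b).erase c)) (v b)
                  + (μ (v c) (μ (SS μ e v p ((w.erase b).erase c)) (v b))
                    - μ (v b) (μ (v c) (SS μ e v p ((w.erase b).erase c)))))) := by
            refine Finset.sum_congr rfl fun b _ => Finset.sum_congr rfl fun c _ => ?_
            rw [mu_yy_left μ e v p he, asc]
            simp only [map_sub, map_smul, ContinuousLinearMap.sub_apply,
              ContinuousLinearMap.smul_apply, smul_sub]
            module
        _ = 0 := by
            simp_rw [Finset.sum_sub_distrib]
            have hX : ∑ b ∈ w.toFinset, ∑ c ∈ (w.erase b).toFinset,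
                p c • (μ (SS μ e v p ((w.erase b).erase c)) (v b)
                  - μ (v b) (SS μ e v p ((w.erase b).erase c))) = 0 := by
              rw [sum_erase_swap w _
                (fun b c => p b • (μ (SS μ e v p ((w.erase b).erase c)) (v c)
                  - μ (v c) (SS μ e v p ((w.erase b).erase c))))
                (fun b c => by
                  have hS : (w.erase c).erase b = (w.erase b).erase c := List.erase_comm _ _
                  try simp only []
                  rw [hS])]
              refine Finset.sum_eq_zero fun b hbF => ?_
              have hb := List.mem_toFinset.mp hbF
              rw [← Finset.smul_sum, ih (w.erase b) (hblen b hb) (hb0 b hb), smul_zero]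
            have hasc : ∑ b ∈ w.toFinset, ∑ c ∈ (w.erase b).toFinset,
                asc μ (v c) (SS μ e v p ((w.erase b).erase c)) (v b) = 0 := by
              refine sum_erase_antisymm w _ fun b c => ?_
              have hS : (w.erase c).erase b = (w.erase b).erase c := List.erase_comm _ _
              try simp only []
              rw [hS]
              exact asc_swap13 μ hLA hRA (v b) _ (v c)
            have hD3 : ∑ b ∈ w.toFinset, ∑ c ∈ (w.erase b).toFinset,
                (μ (v c) (μ (SS μ e v p ((w.erase b).erase c)) (v b))
                  - μ (v b) (μ (v c) (SS μ e v p ((w.erase b).erase c)))) = 0 := by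
              simp_rw [Finset.sum_sub_distrib]
              rw [sub_eq_zero]
              rw [sum_erase_swap w
                (fun b c => μ (v c) (μ (SS μ e v p ((w.erase b).erase c)) (v b)))
                (fun b c => μ (v b) (μ (SS μ e v p ((w.erase b).erase c)) (v c)))
                (fun b c => by
                  have hS : (w.erase c).erase b = (w.erase b).erase c := List.erase_comm _ _
                  try simp only []
                  rw [hS])]
              refine Finset.sum_congr rfl fun b hbF => ?_
              have hb := List.mem_toFinset.mp hbF
              rw [← map_sum, ← map_sum]
              congr 1
              rw [← sub_eq_zero, ← Finset.sum_sub_distrib]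
              exact ih (w.erase b) (hblen b hb) (hb0 b hb)
            have hY : ∑ b ∈ w.toFinset, ∑ c ∈ (w.erase b).toFinset,
                p 0 • (asc μ (v c) (SS μ e v p ((w.erase b).erase c)) (v b)
                  + (μ (v c) (μ (SS μ e v p ((w.erase b).erase c)) (v b))
                    - μ (v b) (μ (v c) (SS μ e v p ((w.erase b).erase c))))) = 0 := by
              simp_rw [← Finset.smul_sum, Finset.sum_add_distrib]
              rw [hasc, hD3, add_zero, smul_zero]
            rw [hX, hY, sub_zero]


lemma asc_e_right (he : ∀ a : A, μ e a = a ∧ μ a e = a) (a x : A) : asc μ a x e = 0 := by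
  simp [asc, (he _).2]

/-! ### Right monogenicity -/

lemma R_zero (he : ∀ a : A, μ e a = a ∧ μ a e = a) (hv0 : v 0 = e)
    (hLA : ∀ a b : A, μ (μ a a) b = μ a (μ a b))
    (hRA : ∀ a b : A, μ (μ a b) b = μ a (μ b b)) :
    ∀ (n : ℕ) (w : List (Fin (m + 1))), w.length = n → (0 : Fin (m + 1)) ∉ w →
    ∑ s, μ (DD μ e v p s w) (v s) = 0 := by
  intro n
  induction n with
  | zero =>
    intro w hw _
    rw [List.length_eq_zero_iff.mp hw]
    simp
  | succ n ih =>
    intro w hw h0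
    have hwne : w ≠ [] := by intro h; rw [h] at hw; simp at hw
    have hblen : ∀ b, b ∈ w → (w.erase b).length = n := fun b hb => by
      rw [List.length_erase_of_mem hb, hw]; rfl
    have hb0 : ∀ b, b ∈ w → (0 : Fin (m + 1)) ∉ w.erase b :=
      fun b _ h => h0 (List.mem_of_mem_erase h)
    calc ∑ s, μ (DD μ e v p s w) (v s)
        = ∑ b ∈ w.toFinset, ((∑ s, μ (μ (dd e v s b) (SS μ e v p (w.erase b))) (v s)) +
            ∑ s, μ (μ (yy e v p b) (DD μ e v p s (w.erase b))) (v s)) := by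
          simp_rw [DD_decomp μ e v p hwne, map_sum, ContinuousLinearMap.sum_apply, map_add,
            ContinuousLinearMap.add_apply]
          rw [Finset.sum_comm]
          exact Finset.sum_congr rfl fun b _ => Finset.sum_add_distrib
      _ = ∑ b ∈ w.toFinset, ((μ (SS μ e v p (w.erase b)) (v b) - μ (v b) (SS μ e v p (w.erase b)))
            + (- p 0) • (∑ s ∈ w.toFinset, n •
                asc μ (v b) (SS μ e v p ((w.erase b).erase s)) (v s))) := by
          refine Finset.sum_congr rfl fun b hbF => ?_
          have hb : b ∈ w := List.mem_toFinset.mp hbF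
          congr 1
          · -- leading terms give the commutator
            have hp1 : ∀ s, μ (μ (dd e v s b) (SS μ e v p (w.erase b))) (v s) =
                (if b = s then μ (SS μ e v p (w.erase b)) (v s) else 0)
                  - (if s = 0 then μ (μ (v b) (SS μ e v p (w.erase b))) (v s) else 0) := by
              intro s
              rw [dd, map_sub, ContinuousLinearMap.sub_apply, map_sub,
                ContinuousLinearMap.sub_apply]
              congr 1
              · rcases eq_or_ne b s with rfl | hbs
                · rw [if_pos rfl, if_pos rfl, (he _).1]
                · rw [if_neg hbs, if_neg hbs]; simp
              · rcases eq_or_ne s 0 with rfl | hs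
                · rw [if_pos rfl, if_pos rfl]
                · rw [if_neg hs, if_neg hs]; simp
            rw [Finset.sum_congr rfl (fun s _ => hp1 s), Finset.sum_sub_distrib,
              Finset.sum_ite_eq Finset.univ b
                (fun s => μ (SS μ e v p (w.erase b)) (v s)),
              Finset.sum_ite_eq' Finset.univ (0 : Fin (m + 1))
                (fun s => μ (μ (v b) (SS μ e v p (w.erase b))) (v s)),
              if_pos (Finset.mem_univ b), if_pos (Finset.mem_univ (0 : Fin (m + 1))),
              hv0, (he _).2]
          · -- main terms
            have hT0 : ∑ s, μ (DD μ e v p s (w.erase b)) (v s) = 0 :=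
              ih (w.erase b) (hblen b hb) (hb0 b hb)
            have hp2 : ∀ s, μ (μ (yy e v p b) (DD μ e v p s (w.erase b))) (v s) =
                p b • μ (DD μ e v p s (w.erase b)) (v s)
                - p 0 • (asc μ (v b) (DD μ e v p s (w.erase b)) (v s)
                  + μ (v b) (μ (DD μ e v p s (w.erase b)) (v s))) := by
              intro s
              rw [mu_yy_left μ e v p he, map_sub, map_smul, map_smul,
                ContinuousLinearMap.sub_apply, ContinuousLinearMap.smul_apply,
                ContinuousLinearMap.smul_apply, asc, sub_add_cancel]
            rw [Finset.sum_congr rfl (fun s _ => hp2 s), Finset.sum_sub_distrib,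
              ← Finset.smul_sum, hT0, smul_zero, zero_sub, ← Finset.smul_sum,
              Finset.sum_add_distrib, ← map_sum, hT0, map_zero, add_zero, ← neg_smul]
            congr 1
            have hvan : ∀ s ∈ Finset.univ, s ∉ w.toFinset →
                asc μ (v b) (DD μ e v p s (w.erase b)) (v s) = 0 := by
              intro s _ hsF
              have hs : s ∉ w := fun h => hsF (List.mem_toFinset.mpr h)
              rcases eq_or_ne s 0 with rfl | hs0
              · rw [hv0]
                exact asc_e_right μ e he _ _
              · rw [DD_eq_zero μ e v p (w.erase b).length _ rfl (hb0 b hb) s hs0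
                  (fun h => hs (List.mem_of_mem_erase h))]
                exact asc_zero_mid μ _ _
            rw [← Finset.sum_subset (Finset.subset_univ w.toFinset) hvan]
            refine Finset.sum_congr rfl fun s hsF => ?_
            have hs : s ∈ w := List.mem_toFinset.mp hsF
            rcases eq_or_ne s b with rfl | hsb
            · rw [asc_flex μ hLA hRA, asc_flex μ hLA hRA, smul_zero]
            · have hsw' : s ∈ w.erase b := (List.mem_erase_of_ne hsb).mpr hs
              have hs0 : s ≠ 0 := fun h => h0 (h ▸ hs)
              rw [DD_eq_smul μ e v p he (w.erase b).length _ rfl (hb0 b hb) s hs0 hsw',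
                hblen b hb, asc_nsmul_mid]
      _ = 0 := by
          rw [Finset.sum_add_distrib, C_zero μ e v p he hLA hRA (n + 1) w hw h0, zero_add,
            ← Finset.smul_sum,
            sum_square_antisymm w.toFinset
              (fun b s => n • asc μ (v b) (SS μ e v p ((w.erase b).erase s)) (v s))
              (fun a c => by
                have hS : ((w.erase c).erase a) = ((w.erase a).erase c) :=
                  List.erase_comm _ _
                try simp only []
                rw [hS, asc_swap13 μ hLA hRA, smul_neg]),
            smul_zero]


/-! ### Calculus -/

/-- The Fueter variable as a continuous linear map. -/
noncomputable def zCLM (e : A) (v : Fin (m + 1) → A) (i : Fin (m + 1)) : ((Fin (m + 1)) → ℝ) →L[ℝ] A :=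
  (ContinuousLinearMap.proj i).smulRight e - (ContinuousLinearMap.proj 0).smulRight (v i)

lemma zCLM_apply (i : Fin (m + 1)) (q : (Fin (m + 1)) → ℝ) :
    zCLM e v i q = q i • e - q 0 • v i := by
  simp [zCLM]

/-- The derivative of the product along a list, as a continuous linear map. -/
noncomputable def DCLM : List (Fin (m + 1)) → (((Fin (m + 1)) → ℝ) →L[ℝ] A)
  | [] => 0
  | b :: t => (μ (yy e v p b)).comp (DCLM t) + (μ.flip (prodY μ e v p t)).comp (zCLM e v b)

lemma hasFDeriv_prodY (w : List (Fin (m + 1))) :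
    HasFDerivAt (fun q => prodY μ e v q w) (DCLM μ e v p w) p := by
  induction w with
  | nil => exact hasFDerivAt_const e p
  | cons b t ihw =>
    have hfun : (fun q => prodY μ e v q (b :: t))
        = fun q => (μ.comp (zCLM e v b)) q (prodY μ e v q t) := by
      funext q
      show μ (yy e v q b) (prodY μ e v q t) = μ (zCLM e v b q) (prodY μ e v q t)
      rw [zCLM_apply]
      rfl
    have h := (ContinuousLinearMap.hasFDerivAt (μ.comp (zCLM e v b))).clm_apply ihw
    have hder : DCLM μ e v p (b :: t) =
        ((μ.comp (zCLM e v b)) p).comp (DCLM μ e v p t)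
          + (μ.comp (zCLM e v b)).flip (prodY μ e v p t) := by
      rw [DCLM]
      ext u
      simp only [ContinuousLinearMap.add_apply, ContinuousLinearMap.comp_apply,
        ContinuousLinearMap.flip_apply]
      rw [zCLM_apply]
      rfl
    rw [hfun, hder]
    exact h

lemma DCLM_single (s : Fin (m + 1)) (w : List (Fin (m + 1))) :
    DCLM μ e v p w (Pi.single s 1) = Phi μ e v p s w := by
  induction w with
  | nil => rfl
  | cons b t ihw =>
    rw [DCLM, Phi]
    simp only [ContinuousLinearMap.add_apply, ContinuousLinearMap.comp_apply,
      ContinuousLinearMap.flip_apply, ihw]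
    rw [add_comm]
    congr 2
    rw [zCLM_apply, dd]
    simp only [Pi.single_apply]
    simp [ite_smul, eq_comm]

lemma foldr_eq_prodY (q : (Fin (m + 1)) → ℝ) (u : List (Fin (m + 1))) :
    (u.map (fun i => q i • e - q 0 • v i)).foldr (fun a b => μ a b) e = prodY μ e v q u := by
  induction u with
  | nil => rfl
  | cons b t ihu =>
    show μ (q b • e - q 0 • v b) _ = μ (yy e v q b) (prodY μ e v q t)
    rw [ihu]
    rfl

end FueterAux


/-- For each multi-index `k` (encoded by the sorted list `l` of its indices, all nonzero),
the Fueter polynomial `P_k(x) = (1/k!) ∑_σ z_{i₁} ⋯ z_{i_k}` — the sum running over all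
distinguishable permutations of `l`, products of Fueter variables `z_ℓ(x) = x_ℓ − x₀ v_ℓ`
taken right-to-left (the result being independent of the bracketing) — is both left and
right monogenic on the hypercomplex subspace `M ≅ ℝ^{m+1}`. -/
theorem fueter_polynomial_monogenic {A : Type*} [NormedAddCommGroup A] [NormedSpace ℝ A]
    [FiniteDimensional ℝ A]
    (μ : A →L[ℝ] A →L[ℝ] A) (e : A)
    (he : ∀ a : A, μ e a = a ∧ μ a e = a)
    (hLA : ∀ a b : A, μ (μ a a) b = μ a (μ a b))
    (hRA : ∀ a b : A, μ (μ a b) b = μ a (μ b b))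
    (m : ℕ) (hm : 1 ≤ m) (v : Fin (m + 1) → A)
    (hv0 : v 0 = e)
    (hvsq : ∀ s, s ≠ 0 → μ (v s) (v s) = -e)
    (hvanti : ∀ s t, s ≠ 0 → t ≠ 0 → s ≠ t → μ (v s) (v t) = -μ (v t) (v s))
    (l : List (Fin (m + 1))) (hl : (0 : Fin (m + 1)) ∉ l)
    (z : Fin (m + 1) → ((Fin (m + 1)) → ℝ) → A)
    (hz : z = fun ℓ p => p ℓ • e - p 0 • v ℓ)
    (P : ((Fin (m + 1)) → ℝ) → A)
    (hP : P = fun p => ((l.length.factorial : ℝ))⁻¹ •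
      ∑ l' ∈ l.permutations.toFinset, (l'.map (fun i => z i p)).foldr (fun a b => μ a b) e)
    (p : (Fin (m + 1)) → ℝ) :
    ∑ s, μ (v s) (fderiv ℝ P p (Pi.single s 1)) = 0 ∧
    ∑ s, μ (fderiv ℝ P p (Pi.single s 1)) (v s) = 0 := by
  subst hz
  set c : ℝ := ((l.length.factorial : ℝ))⁻¹ with hc
  have hPfun : P = fun q => c • ∑ l' ∈ FueterAux.FP l, FueterAux.prodY μ e v q l' := by
    rw [hP]
    funext q
    congr 1
    exact Finset.sum_congr rfl fun l' _ => FueterAux.foldr_eq_prodY μ e v q l'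
  have hD : HasFDerivAt (fun q => c • ∑ l' ∈ FueterAux.FP l, FueterAux.prodY μ e v q l')
      (c • ∑ l' ∈ FueterAux.FP l, FueterAux.DCLM μ e v p l') p :=
    (HasFDerivAt.fun_sum (fun l' _ => FueterAux.hasFDeriv_prodY μ e v p l')).const_smul c
  rw [hPfun]
  rw [hD.fderiv]
  have happ : ∀ s : Fin (m + 1),
      (c • ∑ l' ∈ FueterAux.FP l, FueterAux.DCLM μ e v p l') (Pi.single s 1)
        = c • FueterAux.DD μ e v p s l := by
    intro s
    rw [ContinuousLinearMap.smul_apply, ContinuousLinearMap.sum_apply]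
    congr 1
    exact Finset.sum_congr rfl fun l' _ => FueterAux.DCLM_single μ e v p s l'
  constructor
  · calc ∑ s, μ (v s) ((c • ∑ l' ∈ FueterAux.FP l, FueterAux.DCLM μ e v p l') (Pi.single s 1))
        = ∑ s, c • μ (v s) (FueterAux.DD μ e v p s l) := by
          refine Finset.sum_congr rfl fun s _ => ?_
          rw [happ s, map_smul]
      _ = c • ∑ s, μ (v s) (FueterAux.DD μ e v p s l) := by rw [Finset.smul_sum]
      _ = 0 := by
          rw [FueterAux.L_zero μ e v p he hv0 l.length l rfl hl, smul_zero]
  · calc ∑ s, μ ((c • ∑ l' ∈ FueterAux.FP l, FueterAux.DCLM μ e v p l') (Pi.single s 1)) (v s)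
        = ∑ s, c • μ (FueterAux.DD μ e v p s l) (v s) := by
          refine Finset.sum_congr rfl fun s _ => ?_
          rw [happ s, map_smul, ContinuousLinearMap.smul_apply]
      _ = c • ∑ s, μ (FueterAux.DD μ e v p s l) (v s) := by rw [Finset.smul_sum]
      _ = 0 := by
          rw [FueterAux.R_zero μ e v p he hv0 hLA hRA l.length l rfl hl, smul_zero]
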